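/- Let H be a complex Hilbert space and 𝔖 ⊆ BL(H) a semigroup of bounded operators, closed under adjoints, with all operators of norm ≤ 1. Let {R_j}_{j∈J} ⊆ 𝔖 be a family of orthogonal projections, let L = ⋂_{j∈J} R_j H, and suppose N ⊆ H is a finite-dimensional subspace invariant under 𝔖 with N ∩ L = {0}. Then there exist finitely many indices j_1,…,j_m ∈ J such that, setting T = R_{j_1}⋯R_{j_m}, the self-adjoint operator S = T*T restricted to N has all eigenvalues strictly less than 1; consequently Sⁿf → 0 for every f ∈ N. -/

import Mathlib

open ContinuousLinearMap in
/-- An orthogonal projection that preserves the norm of a vector fixes it. -/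
lemma aux_proj_fix_stmt19 {H : Type*} [NormedAddCommGroup H] [InnerProductSpace ℂ H]
    [CompleteSpace H] (P : H →L[ℂ] H) (hP2 : P * P = P) (hPadj : adjoint P = P) (f : H)
    (h : ‖P f‖ = ‖f‖) : P f = f := by
  have h1 : P (P f) = P f := by
    have := congrArg (fun A : H →L[ℂ] H => A f) hP2
    simpa using this
  have hinner : (inner ℂ f (P f) : ℂ) = (‖P f‖ : ℂ) ^ 2 := by
    calc (inner ℂ f (P f) : ℂ) = inner ℂ f (P (P f)) := by rw [h1]
      _ = inner ℂ (adjoint P f) (P f) := (adjoint_inner_left P (P f) f).symm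
      _ = inner ℂ (P f) (P f) := by rw [hPadj]
      _ = (‖P f‖ : ℂ) ^ 2 := by
          rw [inner_self_eq_norm_sq_to_K]
          norm_cast
  have hre : RCLike.re (inner ℂ f (P f) : ℂ) = ‖P f‖ ^ 2 := by
    rw [hinner]; norm_cast
  have hsub : ‖f - P f‖ ^ 2 = 0 := by
    rw [@norm_sub_sq ℂ, hre, h]
    ring
  have h0 : f - P f = 0 := by
    have := pow_eq_zero_iff (n := 2) (by norm_num) |>.mp hsub
    exact norm_eq_zero.mp this
  exact (sub_eq_zero.mp h0).symm

/-- Let `𝔖` be a self-adjoint semigroup of contractions on a Hilbert space `H`, `{R_j}` a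
family of orthogonal projections in `𝔖` with `L = ⋂_j R_j H`, and `N` a finite-dimensional
`𝔖`-invariant subspace with `N ∩ L = {0}`.  Then some finite product `T = R_{j₁} ⋯ R_{jₘ}`
gives a self-adjoint operator `S = T*T` all of whose eigenvalues on `N` are `< 1`, and
consequently `Sⁿ f → 0` for every `f ∈ N`. -/
theorem stmt_19 {H : Type*} [NormedAddCommGroup H] [InnerProductSpace ℂ H] [CompleteSpace H]
    (𝔖 : Set (H →L[ℂ] H))
    (hcomp : ∀ a ∈ 𝔖, ∀ b ∈ 𝔖, a * b ∈ 𝔖)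
    (hadj : ∀ a ∈ 𝔖, ContinuousLinearMap.adjoint a ∈ 𝔖)
    (hnorm : ∀ a ∈ 𝔖, ‖a‖ ≤ 1)
    {J : Type*} (R : J → (H →L[ℂ] H))
    (hRmem : ∀ j, R j ∈ 𝔖)
    (hRproj : ∀ j, R j * R j = R j ∧ ContinuousLinearMap.adjoint (R j) = R j)
    (N : Submodule ℂ H) [FiniteDimensional ℂ N]
    (hNinv : ∀ a ∈ 𝔖, ∀ f ∈ N, a f ∈ N)
    (hNL : ∀ f ∈ N, (∀ j, R j f = f) → f = 0) :
    ∃ (m : ℕ) (js : Fin m → J),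
      let T := (List.ofFn fun k => R (js k)).prod
      let S := ContinuousLinearMap.adjoint T * T
      (∀ (c : ℂ) (f : H), f ∈ N → f ≠ 0 → S f = c • f → ‖c‖ < 1) ∧
      ∀ f ∈ N, Filter.Tendsto (fun p : ℕ => (S ^ p) f) Filter.atTop (nhds 0) := by
  classical
  by_cases hbot : N = ⊥
  · refine ⟨0, Fin.elim0, ?_, ?_⟩
    · intro c f hf hf0 _
      exact absurd (by simpa [hbot] using hf) hf0
    · intro f hf
      have hf0 : f = 0 := by simpa [hbot] using hf
      subst hf0
      simpa using (tendsto_const_nhds :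
        Filter.Tendsto (fun _ : ℕ => (0 : H)) Filter.atTop (nhds 0))
  -- basic pointwise norm bound for each projection
  have hR1 : ∀ j (g : H), ‖R j g‖ ≤ ‖g‖ := by
    intro j g
    simpa using (R j).le_of_opNorm_le (hnorm _ (hRmem j)) g
  -- fixed subspaces
  set fix : J → Submodule ℂ H :=
    fun j => LinearMap.eqLocus ((R j : H →ₗ[ℂ] H)) LinearMap.id with hfix
  have mem_fix : ∀ j (f : H), f ∈ fix j ↔ R j f = f := by
    intro j f; rfl
  set K : Finset J → Submodule ℂ H := fun s => N ⊓ ⨅ j ∈ s, fix j with hK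
  haveI hKfin : ∀ s, FiniteDimensional ℂ (K s) := fun s =>
    Submodule.finiteDimensional_of_le (inf_le_left : K s ≤ N)
  have hex : ∃ n, ∃ s : Finset J, Module.finrank ℂ (K s) = n := ⟨_, ∅, rfl⟩
  obtain ⟨s, hs⟩ := Nat.find_spec hex
  have hmin : ∀ t : Finset J, Nat.find hex ≤ Module.finrank ℂ (K t) := fun t =>
    Nat.find_min' hex ⟨t, rfl⟩
  have hKs_le : ∀ j, K s ≤ fix j := by
    intro j
    have hle : K (insert j s) ≤ K s := by
      refine inf_le_inf_left N ?_
      exact biInf_mono (fun i hi => Finset.mem_insert_of_mem hi)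
    have heq : K (insert j s) = K s := by
      refine Submodule.eq_of_le_of_finrank_le hle ?_
      rw [hs]; exact hmin _
    calc K s = K (insert j s) := heq.symm
      _ ≤ ⨅ i ∈ insert j s, fix i := inf_le_right
      _ ≤ fix j := iInf₂_le j (Finset.mem_insert_self j s)
  have hKsbot : K s = ⊥ := by
    rw [eq_bot_iff]
    intro f hf
    have hfN : f ∈ N := hf.1
    have hfix' : ∀ j, R j f = f := fun j => (mem_fix j f).mp (hKs_le j hf)
    exact (Submodule.mem_bot ℂ).mpr (hNL f hfN hfix')
  -- for every nonzero f in N some R_j with j ∈ s moves f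
  have hstrictset : ∀ f ∈ N, f ≠ 0 → ∃ j ∈ s, R j f ≠ f := by
    intro f hf hf0
    by_contra hcon
    push_neg at hcon
    have hmem : f ∈ K s := by
      rw [hK]
      exact Submodule.mem_inf.mpr ⟨hf, (Submodule.mem_iInf _).mpr fun j =>
        (Submodule.mem_iInf _).mpr fun hj => (mem_fix j f).mpr (hcon j hj)⟩
    rw [hKsbot] at hmem
    exact hf0 (by simpa using hmem)
  -- list product lemmas
  have hprod_le : ∀ (l : List J) (g : H), ‖(l.map R).prod g‖ ≤ ‖g‖ := by
    intro l
    induction l with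
    | nil => intro g; simp
    | cons j t ih =>
      intro g
      simp only [List.map_cons, List.prod_cons, ContinuousLinearMap.mul_apply]
      exact le_trans (hR1 j _) (ih g)
  have hprod_fixed : ∀ (l : List J) (g : H), (∀ j ∈ l, R j g = g) → (l.map R).prod g = g := by
    intro l
    induction l with
    | nil => intro g _; simp
    | cons j t ih =>
      intro g hg
      simp only [List.map_cons, List.prod_cons, ContinuousLinearMap.mul_apply]
      rw [ih g (fun i hi => hg i (List.mem_cons_of_mem _ hi)), hg j List.mem_cons_self]
  have hprod_eq : ∀ (l : List J) (g : H), ‖(l.map R).prod g‖ = ‖g‖ → ∀ j ∈ l, R j g = g := by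
    intro l
    induction l with
    | nil => intro g _ j hj; simp at hj
    | cons j t ih =>
      intro g hg
      simp only [List.map_cons, List.prod_cons, ContinuousLinearMap.mul_apply] at hg
      have h1 : ‖(t.map R).prod g‖ = ‖g‖ := by
        have hle := hprod_le t g
        have hge : ‖g‖ ≤ ‖(t.map R).prod g‖ := by
          rw [← hg]; exact hR1 j _
        linarith
      have ht := ih g h1
      have hgfix : (t.map R).prod g = g := hprod_fixed t g ht
      rw [hgfix] at hg
      have hj : R j g = g := aux_proj_fix_stmt19 (R j) (hRproj j).1 (hRproj j).2 g hg
      intro i hi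
      rcases List.mem_cons.mp hi with h | h
      · rw [h]; exact hj
      · exact ht i h
  have hprod_memN : ∀ (l : List J) (g : H), g ∈ N → (l.map R).prod g ∈ N := by
    intro l
    induction l with
    | nil => intro g hg; simpa using hg
    | cons j t ih =>
      intro g hg
      simp only [List.map_cons, List.prod_cons, ContinuousLinearMap.mul_apply]
      exact hNinv (R j) (hRmem j) _ (ih g hg)
  have hadj_prod : ∀ l : List J,
      ContinuousLinearMap.adjoint ((l.map R).prod) = ((l.reverse).map R).prod := by
    intro l
    induction l with
    | nil =>
      simp only [List.map_nil, List.prod_nil, List.reverse_nil]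
      rw [← ContinuousLinearMap.star_eq_adjoint, star_one]
    | cons j t ih =>
      simp only [List.map_cons, List.prod_cons, List.reverse_cons, List.map_append,
        List.prod_append, List.map_nil, List.prod_nil, List.map_cons, List.prod_cons, mul_one]
      rw [← ContinuousLinearMap.star_eq_adjoint, star_mul,
        ContinuousLinearMap.star_eq_adjoint, ContinuousLinearMap.star_eq_adjoint, ih,
        (hRproj j).2]
  -- choose the list
  set l : List J := s.toList with hl
  refine ⟨l.length, fun k => l.get k, ?_⟩
  have hofn : (List.ofFn fun k => R ((fun k => l.get k) k)) = l.map R := by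
    rw [show (fun k => R ((fun k => l.get k) k)) = R ∘ l.get from rfl, ← List.map_ofFn,
      List.ofFn_get]
  rw [hofn]
  set T : H →L[ℂ] H := (l.map R).prod with hT
  set S : H →L[ℂ] H := ContinuousLinearMap.adjoint T * T with hSdef
  -- strict decrease of T on N
  have hTlt : ∀ f ∈ N, f ≠ 0 → ‖T f‖ < ‖f‖ := by
    intro f hf hf0
    rcases lt_or_eq_of_le (hprod_le l f) with h | h
    · exact h
    · exfalso
      obtain ⟨j, hjs, hj⟩ := hstrictset f hf hf0
      exact hj (hprod_eq l f h j (by rwa [hl, Finset.mem_toList]))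
  have hSlt : ∀ f ∈ N, f ≠ 0 → ‖S f‖ < ‖f‖ := by
    intro f hf hf0
    have h1 : ‖S f‖ ≤ ‖T f‖ := by
      rw [hSdef]
      simp only [ContinuousLinearMap.mul_apply]
      rw [hadj_prod l]
      exact hprod_le l.reverse (T f)
    exact lt_of_le_of_lt h1 (hTlt f hf hf0)
  have hSmem : ∀ f ∈ N, S f ∈ N := by
    intro f hf
    rw [hSdef]
    simp only [ContinuousLinearMap.mul_apply]
    rw [hadj_prod l]
    exact hprod_memN l.reverse _ (hprod_memN l f hf)
  constructor
  · -- eigenvalue part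
    intro c f hfN hf0 hSf
    have h1 : ‖c‖ * ‖f‖ < ‖f‖ := by
      have := hSlt f hfN hf0
      rwa [hSf, norm_smul] at this
    have hfpos : 0 < ‖f‖ := norm_pos_iff.mpr hf0
    nlinarith
  · -- convergence part
    haveI : Nontrivial N := Submodule.nontrivial_iff_ne_bot.mpr hbot
    have hcomp_sphere : IsCompact (Metric.sphere (0 : N) 1) := isCompact_sphere 0 1
    have hne : (Metric.sphere (0 : N) 1).Nonempty := NormedSpace.sphere_nonempty.mpr zero_le_one
    have hcont : Continuous (fun x : N => ‖S (x : H)‖) :=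
      (S.continuous.comp continuous_subtype_val).norm
    obtain ⟨x₀, hx₀s, hx₀max⟩ := hcomp_sphere.exists_isMaxOn hne hcont.continuousOn
    set r : ℝ := ‖S (x₀ : H)‖ with hr
    have hr0 : 0 ≤ r := norm_nonneg _
    have hx₀norm : ‖(x₀ : H)‖ = 1 := by
      have := mem_sphere_zero_iff_norm.mp hx₀s
      simpa using this
    have hx₀ne : (x₀ : H) ≠ 0 := by
      intro h; rw [h] at hx₀norm; simp at hx₀norm
    have hr1 : r < 1 := by
      have := hSlt (x₀ : H) x₀.2 hx₀ne
      rwa [hx₀norm] at this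
    have hbound : ∀ g ∈ N, ‖S g‖ ≤ r * ‖g‖ := by
      intro g hg
      rcases eq_or_ne g 0 with rfl | hg0
      · simp
      · have hgn : (0:ℝ) < ‖g‖ := norm_pos_iff.mpr hg0
        set x : H := ((‖g‖ : ℂ))⁻¹ • g with hx
        have hxN : x ∈ N := N.smul_mem _ hg
        have hxnorm : ‖x‖ = 1 := by
          rw [hx, norm_smul, norm_inv, Complex.norm_real, Real.norm_eq_abs,
            abs_of_pos hgn, inv_mul_cancel₀ hgn.ne']
        have hxs : (⟨x, hxN⟩ : N) ∈ Metric.sphere (0 : N) 1 := by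
          rw [mem_sphere_zero_iff_norm]
          simpa using hxnorm
        have hmax := hx₀max hxs
        simp only [Set.mem_setOf_eq] at hmax
        have hSx : ‖S x‖ ≤ r := hmax
        rw [hx, map_smul, norm_smul, norm_inv, Complex.norm_real, Real.norm_eq_abs,
          abs_of_pos hgn] at hSx
        calc ‖S g‖ = ‖g‖ * (‖g‖⁻¹ * ‖S g‖) := by field_simp
          _ ≤ ‖g‖ * r := by
            apply mul_le_mul_of_nonneg_left hSx (norm_nonneg g)
          _ = r * ‖g‖ := mul_comm _ _
    have hiter : ∀ (f : H), f ∈ N → ∀ p : ℕ, ((S ^ p) f ∈ N) ∧ ‖(S ^ p) f‖ ≤ r ^ p * ‖f‖ := by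
      intro f hf p
      induction p with
      | zero => simpa using hf
      | succ p ih =>
        have hrw : (S ^ (p + 1)) f = S ((S ^ p) f) := by
          rw [pow_succ', ContinuousLinearMap.mul_apply]
        constructor
        · rw [hrw]; exact hSmem _ ih.1
        · rw [hrw]
          calc ‖S ((S ^ p) f)‖ ≤ r * ‖(S ^ p) f‖ := hbound _ ih.1
            _ ≤ r * (r ^ p * ‖f‖) := mul_le_mul_of_nonneg_left ih.2 hr0
            _ = r ^ (p + 1) * ‖f‖ := by ring
    intro f hf
    apply squeeze_zero_norm (fun p => (hiter f hf p).2)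
    have h0 : Filter.Tendsto (fun p : ℕ => r ^ p) Filter.atTop (nhds 0) :=
      tendsto_pow_atTop_nhds_zero_of_lt_one hr0 hr1
    simpa using h0.mul_const ‖f‖
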